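/- Let G = S_n + e be a star S_n together with one extra edge joining two leaves (forming a triangle with a pendant star). Then r(S_n + e) ≥ 2n+1: the 2-coloring of K_{2n} with vertex set U ∪ W ∪ {v}, |U| = n, |W| = n-1, where edges within U, within W, and from v to W are blue, and edges from v to U and between U and W are red, contains no monochromatic copy of S_n + e. Consequently the star S_n is Ramsey saturated. -/

import Mathlib

open SimpleGraph

/-- The graph of edges of color `b` in the 2-coloring `c` of a complete graph. -/
def colorGraph {V : Type*} (c : Sym2 V → Bool) (b : Bool) : SimpleGraph V :=
  SimpleGraph.fromRel (fun u v => c s(u, v) = b)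

/-- `G` occurs as a (not nec. induced) subgraph of `H`. -/
def ContainsCopy {V W : Type*} (G : SimpleGraph V) (H : SimpleGraph W) : Prop :=
  ∃ f : V → W, Function.Injective f ∧ ∀ ⦃u v : V⦄, G.Adj u v → H.Adj (f u) (f v)

/-- The coloring `c` contains a monochromatic copy of `G`. -/
def HasMonoCopy {V W : Type*} (G : SimpleGraph V) (c : Sym2 W → Bool) : Prop :=
  ∃ b : Bool, ContainsCopy G (colorGraph c b)

/-- The (diagonal) Ramsey number of a graph `G`. -/
noncomputable def ramseyNumber {V : Type*} (G : SimpleGraph V) : ℕ :=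
  sInf {r : ℕ | ∀ c : Sym2 (Fin r) → Bool, HasMonoCopy G c}

/-- The star `S n = K_{1,n}`: center `0`, `n` leaves. -/
def starGraph (n : ℕ) : SimpleGraph (Fin (n + 1)) :=
  SimpleGraph.fromRel (fun u v => u = 0)

/-- The bistar `B(m,n)`: adjacent centers `inl 0`, `inl 1`, with `m` resp. `n` leaves. -/
def bistar (m n : ℕ) : SimpleGraph (Fin 2 ⊕ Fin m ⊕ Fin n) :=
  SimpleGraph.fromRel (fun u v =>
    (u = Sum.inl 0 ∧ v = Sum.inl 1) ∨
    (u = Sum.inl 0 ∧ ∃ i, v = Sum.inr (Sum.inl i)) ∨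
    (u = Sum.inl 1 ∧ ∃ j, v = Sum.inr (Sum.inr j)))

/-- The star `S n` with one extra edge between two of its leaves (leaves `1` and `2`). -/
def starPlusEdge (n : ℕ) : SimpleGraph (Fin (n + 1)) :=
  SimpleGraph.fromRel (fun u v => u = 0 ∨ (u = 1 ∧ v = 2))

/- ### Auxiliary lemmas -/

lemma RS.val_one (n : ℕ) (hn : 2 ≤ n) : ((1 : Fin (n+1)) : ℕ) = 1 := by
  simp [Fin.val_one']; omega

lemma RS.val_two (n : ℕ) (hn : 2 ≤ n) : ((2 : Fin (n+1)) : ℕ) = 2 := by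
  show 2 % (n+1) = 2
  exact Nat.mod_eq_of_lt (by omega)

lemma RS.colorGraph_adj {V : Type*} {c : Sym2 V → Bool} {b : Bool} {u v : V} :
    (colorGraph c b).Adj u v ↔ u ≠ v ∧ c s(u,v) = b := by
  rw [colorGraph, SimpleGraph.fromRel_adj]
  constructor
  · rintro ⟨h, h1 | h1⟩
    · exact ⟨h, h1⟩
    · exact ⟨h, by rwa [Sym2.eq_swap]⟩
  · rintro ⟨h, h1⟩; exact ⟨h, Or.inl h1⟩

lemma RS.exists_inj {α : Type*} (S : Finset α) (k : ℕ) (h : k ≤ S.card) :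
    ∃ g : Fin k → α, Function.Injective g ∧ ∀ i, g i ∈ S := by
  obtain ⟨T, hTS, hT⟩ := Finset.exists_subset_card_eq h
  refine ⟨fun i => (T.equivFin.symm (Fin.cast hT.symm i)).1, ?_, ?_⟩
  · intro i j hij
    have := T.equivFin.symm.injective (Subtype.ext hij)
    exact Fin.cast_injective _ this
  · intro i
    exact hTS (T.equivFin.symm (Fin.cast hT.symm i)).2

/-- The canonical 2-coloring of `K_{2n}` (two blue cliques of size `n`, red complete
bipartite between them) contains no monochromatic `S_n + e`. -/
lemma RS.lemA (n : ℕ) (hn : 2 ≤ n) (c : Sym2 (Fin (2*n)) → Bool)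
    (hc : ∀ u v : Fin (2*n), u ≠ v →
      (c s(u, v) = true ↔ (((u : ℕ) < n) ↔ ((v : ℕ) < n)))) :
    ¬ HasMonoCopy (starPlusEdge n) c := by
  rintro ⟨b, f, hinj, hmap⟩
  have h1v := RS.val_one n hn
  have h2v := RS.val_two n hn
  have h01 : (0 : Fin (n+1)) ≠ 1 := by
    intro h; apply_fun (Fin.val) at h; simp [h1v] at h; omega
  have h02 : (0 : Fin (n+1)) ≠ 2 := by
    intro h; apply_fun (Fin.val) at h; rw [Fin.val_zero, h2v] at h; omega
  have h12 : (1 : Fin (n+1)) ≠ 2 := by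
    intro h; apply_fun (Fin.val) at h; rw [h1v, h2v] at h; omega
  have hedge : ∀ i : Fin (n+1), 0 ≠ i → c s(f 0, f i) = b := by
    intro i hi
    have hadj : (starPlusEdge n).Adj 0 i := by
      rw [starPlusEdge, SimpleGraph.fromRel_adj]
      exact ⟨hi, Or.inl (Or.inl rfl)⟩
    exact (RS.colorGraph_adj.mp (hmap hadj)).2
  have h12c : c s(f 1, f 2) = b := by
    have hadj : (starPlusEdge n).Adj 1 2 := by
      rw [starPlusEdge, SimpleGraph.fromRel_adj]
      exact ⟨h12, Or.inl (Or.inr ⟨rfl, rfl⟩)⟩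
    exact (RS.colorGraph_adj.mp (hmap hadj)).2
  cases b with
  | true =>
    have hsame : ∀ i : Fin (n+1), 0 ≠ i → (((f 0 : ℕ) < n) ↔ ((f i : ℕ) < n)) :=
      fun i hi => (hc (f 0) (f i) (fun h => hi (hinj h))).mp (hedge i hi)
    by_cases h0 : (f 0 : ℕ) < n
    · have hall : ∀ i : Fin (n+1), (f i : ℕ) < n := by
        intro i
        by_cases hi : (0 : Fin (n+1)) = i
        · rwa [← hi]
        · exact (hsame i hi).mp h0
      have : Function.Injective (fun i : Fin (n+1) => (⟨(f i : ℕ), hall i⟩ : Fin n)) := by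
        intro i j h
        have h' := congrArg Fin.val h
        simp at h'
        exact hinj (Fin.ext h')
      have := Fintype.card_le_of_injective _ this
      rw [Fintype.card_fin, Fintype.card_fin] at this; omega
    · have hall : ∀ i : Fin (n+1), n ≤ (f i : ℕ) := by
        intro i
        by_cases hi : (0 : Fin (n+1)) = i
        · rw [← hi]; omega
        · have := (hsame i hi); omega
      have : Function.Injective (fun i : Fin (n+1) =>
          (⟨(f i : ℕ) - n, by have := (f i).isLt; omega⟩ : Fin n)) := by
        intro i j h
        have h' := congrArg Fin.val h
        simp at h'
        have := hall i; have := hall j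
        exact hinj (Fin.ext (by omega))
      have := Fintype.card_le_of_injective _ this
      rw [Fintype.card_fin, Fintype.card_fin] at this; omega
  | false =>
    have hopp : ∀ i : Fin (n+1), 0 ≠ i → ¬(((f 0 : ℕ) < n) ↔ ((f i : ℕ) < n)) := by
      intro i hi h
      have := (hc (f 0) (f i) (fun h => hi (hinj h))).mpr h
      rw [hedge i hi] at this
      exact Bool.false_ne_true this
    have h1 := hopp 1 h01
    have h2 := hopp 2 h02
    have h12' : ¬(((f 1 : ℕ) < n) ↔ ((f 2 : ℕ) < n)) := by
      intro h
      have := (hc (f 1) (f 2) (fun h => h12 (hinj h))).mpr h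
      rw [h12c] at this
      exact Bool.false_ne_true this
    tauto

/-- Pigeonhole: in a 2-coloring of a complete graph on `Fin m`, vertex `v` has at least
`k` neighbors of one color, provided `2*k ≤ m - 1`. -/
lemma RS.pigeon {m : ℕ} (c : Sym2 (Fin m) → Bool) (v : Fin m) (k : ℕ)
    (hk : 2 * k ≤ m) :
    ∃ b : Bool, k ≤ ((Finset.univ.erase v).filter (fun u => c s(v,u) = b)).card := by
  have hE : (Finset.univ.erase v).card = m - 1 := by
    rw [Finset.card_erase_of_mem (Finset.mem_univ v), Finset.card_univ, Fintype.card_fin]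
  have hsum := Finset.card_filter_add_card_filter_not
    (s := Finset.univ.erase v) (p := fun u => c s(v,u) = true)
  have hneg : (Finset.univ.erase v).filter (fun u => ¬ (c s(v,u) = true))
      = (Finset.univ.erase v).filter (fun u => c s(v,u) = false) := by
    apply Finset.filter_congr
    intro u _
    simp [Bool.not_eq_true]
  rw [hneg, hE] at hsum
  by_cases h : k ≤ ((Finset.univ.erase v).filter (fun u => c s(v,u) = true)).card
  · exact ⟨true, h⟩
  · exact ⟨false, by omega⟩

/-- Every 2-coloring of `K_{4n+1}` contains a monochromatic `S_n + e`. -/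
lemma RS.lemB (n : ℕ) (hn : 2 ≤ n) (c : Sym2 (Fin (4*n+1)) → Bool) :
    HasMonoCopy (starPlusEdge n) c := by
  have h1v := RS.val_one n hn
  have h2v := RS.val_two n hn
  set v : Fin (4*n+1) := ⟨0, by omega⟩ with hv
  obtain ⟨b, hNcard⟩ := RS.pigeon c v (2*n) (by omega)
  set N : Finset (Fin (4*n+1)) := (Finset.univ.erase v).filter (fun u => c s(v,u) = b) with hN
  have hNmem : ∀ u ∈ N, u ≠ v ∧ c s(v,u) = b := by
    intro u hu
    rw [hN, Finset.mem_filter, Finset.mem_erase] at hu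
    exact ⟨hu.1.1, hu.2⟩
  by_cases hx : ∃ x ∈ N, ∃ y ∈ N, x ≠ y ∧ c s(x,y) = b
  · obtain ⟨x, hxN, y, hyN, hxy, hxyc⟩ := hx
    set M : Finset (Fin (4*n+1)) := (N.erase x).erase y with hM
    have hMcard : n - 2 ≤ M.card := by
      have h1 : (N.erase x).card = N.card - 1 := Finset.card_erase_of_mem hxN
      have h2 : M.card = (N.erase x).card - 1 :=
        Finset.card_erase_of_mem (Finset.mem_erase.mpr ⟨hxy.symm ∘ Eq.symm ∘ Eq.symm, hyN⟩)
      omega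
    obtain ⟨g, hginj, hgM⟩ := RS.exists_inj M (n-2) hMcard
    have hgN : ∀ i, g i ∈ N := fun i =>
      Finset.mem_of_mem_erase (Finset.mem_of_mem_erase (hgM i))
    have hgx : ∀ i, g i ≠ x := fun i =>
      Finset.ne_of_mem_erase (Finset.mem_of_mem_erase (hgM i))
    have hgy : ∀ i, g i ≠ y := fun i => Finset.ne_of_mem_erase (hgM i)
    have hgv : ∀ i, g i ≠ v := fun i => (hNmem _ (hgN i)).1
    have hxv : x ≠ v := (hNmem _ hxN).1
    have hyv : y ≠ v := (hNmem _ hyN).1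
    set f : Fin (n+1) → Fin (4*n+1) := fun i =>
      if h0 : (i:ℕ) = 0 then v else if h1 : (i:ℕ) = 1 then x else
      if h2 : (i:ℕ) = 2 then y else g ⟨(i:ℕ) - 3, by have := i.isLt; omega⟩ with hf
    have hf0 : ∀ u : Fin (n+1), (u:ℕ) = 0 → f u = v := by
      intro u h; simp only [hf]; rw [dif_pos h]
    have hf1 : ∀ u : Fin (n+1), (u:ℕ) = 1 → f u = x := by
      intro u h; simp only [hf]; rw [dif_neg (by omega), dif_pos h]
    have hf2 : ∀ u : Fin (n+1), (u:ℕ) = 2 → f u = y := by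
      intro u h; simp only [hf]; rw [dif_neg (by omega), dif_neg (by omega), dif_pos h]
    have hfmem : ∀ u : Fin (n+1), (u:ℕ) ≠ 0 → f u ∈ N := by
      intro u h
      by_cases h1 : (u:ℕ) = 1
      · rw [hf1 u h1]; exact hxN
      by_cases h2 : (u:ℕ) = 2
      · rw [hf2 u h2]; exact hyN
      simp only [hf]
      rw [dif_neg h, dif_neg h1, dif_neg h2]
      exact hgN _
    have hfinj : Function.Injective f := by
      intro i j hij
      simp only [hf] at hij
      split_ifs at hij with a1 a2 a3 a4 a5 a6 a7 a8 a9 a10 a11 a12 a13 a14 a15 a16 <;>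
      first
        | exact Fin.ext (by omega)
        | exact absurd hij hxv.symm
        | exact absurd hij hxv
        | exact absurd hij hyv.symm
        | exact absurd hij hyv
        | exact absurd hij hxy
        | exact absurd hij hxy.symm
        | exact absurd hij.symm hxv
        | exact absurd hij.symm hyv
        | exact absurd hij.symm (hgv _)
        | exact absurd hij (hgv _)
        | exact absurd hij.symm (hgx _)
        | exact absurd hij (hgx _)
        | exact absurd hij.symm (hgy _)
        | exact absurd hij (hgy _)
        | (have h' := congrArg Fin.val (hginj hij); simp only [] at h'; exact Fin.ext (by omega))
    refine ⟨b, f, hfinj, ?_⟩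
    intro u w hadj
    rw [starPlusEdge, SimpleGraph.fromRel_adj] at hadj
    obtain ⟨hne, hrel⟩ := hadj
    rw [RS.colorGraph_adj]
    refine ⟨fun h => hne (hfinj h), ?_⟩
    have hw0 : ∀ z : Fin (n+1), z = 0 → (z:ℕ) = 0 := fun z h => by rw [h]; rfl
    rcases hrel with (h | ⟨hu, hw⟩) | (h | ⟨hw, hu⟩)
    · -- u = 0
      rw [hf0 u (hw0 u h)]
      have : (w:ℕ) ≠ 0 := by
        intro hw'
        exact hne (by rw [h]; exact Fin.ext (by rw [hw']; rfl))
      exact (hNmem _ (hfmem w this)).2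
    · -- u = 1, w = 2
      rw [hf1 u (by rw [hu]; exact h1v), hf2 w (by rw [hw]; exact h2v)]
      exact hxyc
    · -- w = 0
      rw [hf0 w (hw0 w h), Sym2.eq_swap]
      have : (u:ℕ) ≠ 0 := by
        intro hu'
        exact hne (by rw [h]; exact Fin.ext (by rw [hu']; rfl))
      exact (hNmem _ (hfmem u this)).2
    · -- w = 1, u = 2
      rw [hf1 w (by rw [hw]; exact h1v), hf2 u (by rw [hu]; exact h2v), Sym2.eq_swap]
      exact hxyc
  · -- no b-colored edge inside N: N is a (!b)-clique of size ≥ 2n ≥ n+1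
    push_neg at hx
    obtain ⟨g, hginj, hgN⟩ := RS.exists_inj N (n+1) (by omega)
    refine ⟨!b, g, hginj, ?_⟩
    intro u w hadj
    rw [starPlusEdge, SimpleGraph.fromRel_adj] at hadj
    obtain ⟨hne, _⟩ := hadj
    rw [RS.colorGraph_adj]
    have hgne : g u ≠ g w := fun h => hne (hginj h)
    refine ⟨hgne, ?_⟩
    have := hx (g u) (hgN u) (g w) (hgN w) hgne
    revert this
    cases (c s(g u, g w)) <;> cases b <;> simp

/-- Every 2-coloring of `K_{2n}` contains a monochromatic `S_n`. -/
lemma RS.lemC (n : ℕ) (hn : 2 ≤ n) (c : Sym2 (Fin (2*n)) → Bool) :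
    HasMonoCopy (_root_.starGraph n) c := by
  set v : Fin (2*n) := ⟨0, by omega⟩ with hv
  obtain ⟨b, hNcard⟩ := RS.pigeon c v n (by omega)
  set N : Finset (Fin (2*n)) := (Finset.univ.erase v).filter (fun u => c s(v,u) = b) with hN
  have hNmem : ∀ u ∈ N, u ≠ v ∧ c s(v,u) = b := by
    intro u hu
    rw [hN, Finset.mem_filter, Finset.mem_erase] at hu
    exact ⟨hu.1.1, hu.2⟩
  obtain ⟨g, hginj, hgN⟩ := RS.exists_inj N n hNcard
  have hgv : ∀ i, g i ≠ v := fun i => (hNmem _ (hgN i)).1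
  set f : Fin (n+1) → Fin (2*n) := fun i =>
    if h0 : (i:ℕ) = 0 then v else g ⟨(i:ℕ) - 1, by have := i.isLt; omega⟩ with hf
  have hf0 : ∀ u : Fin (n+1), (u:ℕ) = 0 → f u = v := by
    intro u h; simp only [hf]; rw [dif_pos h]
  have hfmem : ∀ u : Fin (n+1), (u:ℕ) ≠ 0 → f u ∈ N := by
    intro u h; simp only [hf]; rw [dif_neg h]; exact hgN _
  have hfinj : Function.Injective f := by
    intro i j hij
    simp only [hf] at hij
    split_ifs at hij with a1 a2 <;>
    first
      | exact Fin.ext (by omega)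
      | exact absurd hij.symm (hgv _)
      | exact absurd hij (hgv _)
      | (have h' := congrArg Fin.val (hginj hij); simp only [] at h'; exact Fin.ext (by omega))
  refine ⟨b, f, hfinj, ?_⟩
  intro u w hadj
  rw [_root_.starGraph, SimpleGraph.fromRel_adj] at hadj
  obtain ⟨hne, hrel⟩ := hadj
  rw [RS.colorGraph_adj]
  refine ⟨fun h => hne (hfinj h), ?_⟩
  have hw0 : ∀ z : Fin (n+1), z = 0 → (z:ℕ) = 0 := fun z h => by rw [h]; rfl
  rcases hrel with h | h
  · rw [hf0 u (hw0 u h)]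
    have : (w:ℕ) ≠ 0 := by
      intro hw'
      exact hne (by rw [h]; exact Fin.ext (by rw [hw']; rfl))
    exact (hNmem _ (hfmem w this)).2
  · rw [hf0 w (hw0 w h), Sym2.eq_swap]
    have : (u:ℕ) ≠ 0 := by
      intro hu'
      exact hne (by rw [h]; exact Fin.ext (by rw [hu']; rfl))
    exact (hNmem _ (hfmem u this)).2

/-- The canonical coloring as a function on `Sym2`. -/
noncomputable def RS.c0 (n : ℕ) : Sym2 (Fin (2*n)) → Bool :=
  Sym2.lift ⟨fun u v => decide (((u:ℕ) < n) ↔ ((v:ℕ) < n)),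
    fun a b => decide_eq_decide.mpr Iff.comm⟩

lemma RS.c0_spec (n : ℕ) : ∀ u v : Fin (2*n), u ≠ v →
    ((RS.c0 n) s(u, v) = true ↔ (((u : ℕ) < n) ↔ ((v : ℕ) < n))) := by
  intro u v _
  rw [RS.c0, Sym2.lift_mk]
  exact decide_eq_true_iff

theorem starPlusEdge_ramsey_lower (n : ℕ) (hn : 2 ≤ n) :
    (∀ c : Sym2 (Fin (2 * n)) → Bool,
      (∀ u v : Fin (2 * n), u ≠ v →
        (c s(u, v) = true ↔ (((u : ℕ) < n) ↔ ((v : ℕ) < n)))) →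
      ¬ HasMonoCopy (starPlusEdge n) c) ∧
    2 * n + 1 ≤ ramseyNumber (starPlusEdge n) ∧
    ramseyNumber (_root_.starGraph n) < ramseyNumber (starPlusEdge n) := by
  have hA := RS.lemA n hn
  -- the lower bound on the Ramsey number of S_n + e
  have hlow : 2 * n + 1 ≤ ramseyNumber (starPlusEdge n) := by
    rw [ramseyNumber]
    have hub : (4*n+1) ∈ {r : ℕ | ∀ c : Sym2 (Fin r) → Bool, HasMonoCopy (starPlusEdge n) c} :=
      fun c => RS.lemB n hn c
    apply le_csInf ⟨_, hub⟩
    intro r hr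
    by_contra h
    push_neg at h
    have hrle : r ≤ 2*n := by omega
    -- pull back the canonical coloring to Fin r
    set cr : Sym2 (Fin r) → Bool := fun e => RS.c0 n (Sym2.map (Fin.castLE hrle) e) with hcr
    obtain ⟨b, f, hinj, hmap⟩ := hr cr
    apply hA (RS.c0 n) (RS.c0_spec n)
    refine ⟨b, Fin.castLE hrle ∘ f, (Fin.castLE_injective hrle).comp hinj, ?_⟩
    intro u w hadj
    have h' := hmap hadj
    rw [RS.colorGraph_adj] at h' ⊢
    simp only [Function.comp_apply]
    refine ⟨fun h => h'.1 (Fin.castLE_injective hrle h), ?_⟩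
    have : cr s(f u, f w) = RS.c0 n s(Fin.castLE hrle (f u), Fin.castLE hrle (f w)) := by
      rw [hcr]; rfl
    rw [← this]
    exact h'.2
  refine ⟨fun c hc => RS.lemA n hn c hc, hlow, ?_⟩
  have hstar : ramseyNumber (_root_.starGraph n) ≤ 2 * n := by
    rw [ramseyNumber]
    exact Nat.sInf_le (fun c => RS.lemC n hn c)
  omega
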